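/- arXiv:2503.19190 — 3 statements merged into one kernel-verified Lean document; each statement's English description precedes it below -/
import Mathlib

section
/- Conversely, if g : X → ℝ≥0 is convex and γ-homogeneous with γ ≥ 1 (g(αx) = |α|^γ g(x)), then p(x) := (g(x))^{1/γ} is a seminorm on X. -/
theorem stmt_6 {X : Type*} [AddCommGroup X] [Module ℝ X] (g : X → ℝ)
    (hpos : ∀ x : X, 0 ≤ g x)
    (hconv : ∀ (x y : X) (t : ℝ), 0 ≤ t → t ≤ 1 →
      g (t • x + (1 - t) • y) ≤ t * g x + (1 - t) * g y)
    (γ : ℝ) (hγ : 1 ≤ γ)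
    (hhom : ∀ (α : ℝ) (x : X), g (α • x) = |α| ^ γ * g x) :
    (∀ x : X, 0 ≤ g x ^ (1 / γ)) ∧
    (∀ (α : ℝ) (x : X), g (α • x) ^ (1 / γ) = |α| * g x ^ (1 / γ)) ∧
    (∀ x y : X, g (x + y) ^ (1 / γ) ≤ g x ^ (1 / γ) + g y ^ (1 / γ)) := by
  have hγ0 : (0:ℝ) < γ := lt_of_lt_of_le one_pos hγ
  have hγne : γ ≠ 0 := ne_of_gt hγ0
  refine ⟨fun x => Real.rpow_nonneg (hpos x) _, ?_, ?_⟩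
  · intro α x
    rw [hhom α x, Real.mul_rpow (Real.rpow_nonneg (abs_nonneg α) γ) (hpos x),
      ← Real.rpow_mul (abs_nonneg α), mul_one_div_cancel hγne, Real.rpow_one]
  · intro x y
    -- p z := g z ^ (1/γ)
    refine le_of_forall_pos_le_add (fun ε hε => ?_)
    set a : ℝ := g x ^ (1 / γ) with ha
    set b : ℝ := g y ^ (1 / γ) with hb
    have ha0 : 0 ≤ a := Real.rpow_nonneg (hpos x) _
    have hb0 : 0 ≤ b := Real.rpow_nonneg (hpos y) _
    set aε : ℝ := a + ε / 2 with haε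
    set bε : ℝ := b + ε / 2 with hbε
    have haε0 : 0 < aε := by positivity
    have hbε0 : 0 < bε := by positivity
    set s : ℝ := aε + bε with hs
    have hs0 : 0 < s := by positivity
    set t : ℝ := aε / s with htdef
    have ht0 : 0 < t := div_pos haε0 hs0
    have ht1 : t < 1 := by
      rw [htdef, div_lt_one hs0, hs]; linarith
    have h1t : 1 - t = bε / s := by
      field_simp [htdef, hs]
      rw [htdef, sub_mul, div_mul_cancel₀ _ (ne_of_gt hs0), hs]; ring
    have h1t0 : 0 < 1 - t := by linarith
    -- convexity applied to rescaled points
    have key := hconv (t⁻¹ • x) ((1 - t)⁻¹ • y) t (le_of_lt ht0) (le_of_lt ht1)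
    rw [smul_smul, smul_smul, mul_inv_cancel₀ (ne_of_gt ht0),
      mul_inv_cancel₀ (ne_of_gt h1t0), one_smul, one_smul] at key
    rw [hhom, hhom] at key
    -- bound g x ≤ aε^γ, g y ≤ bε^γ
    have hgx : g x ≤ aε ^ γ := by
      have : a ^ γ ≤ aε ^ γ := Real.rpow_le_rpow ha0 (by rw [haε]; linarith) (le_of_lt hγ0)
      calc g x = a ^ γ := by
            rw [ha, one_div, Real.rpow_inv_rpow (hpos x) hγne]
        _ ≤ aε ^ γ := this
    have hgy : g y ≤ bε ^ γ := by
      have : b ^ γ ≤ bε ^ γ := Real.rpow_le_rpow hb0 (by rw [hbε]; linarith) (le_of_lt hγ0)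
      calc g y = b ^ γ := by
            rw [hb, one_div, Real.rpow_inv_rpow (hpos y) hγne]
        _ ≤ bε ^ γ := this
    have habs1 : |t⁻¹| = t⁻¹ := abs_of_pos (inv_pos.mpr ht0)
    have habs2 : |(1 - t)⁻¹| = (1 - t)⁻¹ := abs_of_pos (inv_pos.mpr h1t0)
    rw [habs1, habs2] at key
    have hterm1 : t * (t⁻¹ ^ γ * g x) ≤ t * s ^ γ := by
      have h1 : t⁻¹ ^ γ * g x ≤ t⁻¹ ^ γ * aε ^ γ := by
        exact mul_le_mul_of_nonneg_left hgx (Real.rpow_nonneg (le_of_lt (inv_pos.mpr ht0)) γ)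
      have h2 : t⁻¹ ^ γ * aε ^ γ = s ^ γ := by
        rw [← Real.mul_rpow (le_of_lt (inv_pos.mpr ht0)) (le_of_lt haε0)]
        congr 1
        rw [htdef]
        field_simp
      exact mul_le_mul_of_nonneg_left (h2 ▸ h1) (le_of_lt ht0)
    have hterm2 : (1 - t) * ((1 - t)⁻¹ ^ γ * g y) ≤ (1 - t) * s ^ γ := by
      have h1 : (1 - t)⁻¹ ^ γ * g y ≤ (1 - t)⁻¹ ^ γ * bε ^ γ := by
        exact mul_le_mul_of_nonneg_left hgy (Real.rpow_nonneg (le_of_lt (inv_pos.mpr h1t0)) γ)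
      have h2 : (1 - t)⁻¹ ^ γ * bε ^ γ = s ^ γ := by
        rw [← Real.mul_rpow (le_of_lt (inv_pos.mpr h1t0)) (le_of_lt hbε0)]
        congr 1
        rw [h1t]
        field_simp
      exact mul_le_mul_of_nonneg_left (h2 ▸ h1) (le_of_lt h1t0)
    have hfinal : g (x + y) ≤ s ^ γ := by
      calc g (x + y) ≤ t * (t⁻¹ ^ γ * g x) + (1 - t) * ((1 - t)⁻¹ ^ γ * g y) := by
            linarith [key]
        _ ≤ t * s ^ γ + (1 - t) * s ^ γ := add_le_add hterm1 hterm2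
        _ = s ^ γ := by ring
    have : g (x + y) ^ (1 / γ) ≤ (s ^ γ) ^ (1 / γ) :=
      Real.rpow_le_rpow (hpos _) hfinal (by positivity)
    have hss : (s ^ γ) ^ (1 / γ) = s := by
      rw [one_div, Real.rpow_rpow_inv (le_of_lt hs0) hγne]
    rw [hss] at this
    calc g (x + y) ^ (1 / γ) ≤ s := this
      _ = a + b + ε := by rw [hs, haε, hbε]; ring
end

section
/- For every x ∈ ℝ^N, ‖x‖_∞ = min{‖z‖₁ : x = B_N z}, where B_N ∈ ℝ^{N×2^N} is the matrix whose columns are all sign vectors in {-1,+1}^N; i.e., the ℓ∞-norm is the atomic norm of the dictionary of sign vectors. -/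
open Finset

theorem stmt_16 {N : ℕ} (x : Fin N → ℝ) :
    IsLeast {c : ℝ | ∃ z : (Fin N → Bool) → ℝ,
        (∀ n : Fin N, (∑ s : Fin N → Bool, (if s n then (1 : ℝ) else -1) * z s) = x n) ∧
        c = ∑ s : Fin N → Bool, |z s|}
      ‖x‖ := by
  constructor
  · -- membership
    by_cases hM : ‖x‖ = 0
    · have hx0 : x = 0 := norm_eq_zero.mp hM
      refine ⟨0, ?_, ?_⟩
      · intro n; simp [hx0]
      · simp [hM]
    · have hMpos : (0:ℝ) < ‖x‖ := lt_of_le_of_ne (norm_nonneg x) (Ne.symm hM)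
      set M := ‖x‖ with hMdef
      have hMne : M ≠ 0 := ne_of_gt hMpos
      have hxle : ∀ n, |x n| ≤ M := by
        intro n
        simpa using norm_le_pi_norm x n
      set q : Fin N → Bool → ℝ :=
        fun n b => if b then (1 + x n / M) / 2 else (1 - x n / M) / 2 with hq
      have hqnonneg : ∀ n b, 0 ≤ q n b := by
        intro n b
        have h1 : |x n / M| ≤ 1 := by
          rw [abs_div, abs_of_pos hMpos]
          exact (div_le_one hMpos).mpr (hxle n)
        rw [abs_le] at h1
        cases b <;> simp only [hq] <;> simp <;> linarith [h1.1, h1.2]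
      have hqsum : ∀ n, q n true + q n false = 1 := by
        intro n; simp only [hq, if_true, Bool.false_eq_true, if_false]; ring
      have hqsign : ∀ n, q n true - q n false = x n / M := by
        intro n; simp only [hq, if_true, Bool.false_eq_true, if_false]; ring
      refine ⟨fun s => M * ∏ m, q m (s m), ?_, ?_⟩
      · intro n
        have key : ∀ s : Fin N → Bool,
            (if s n then (1:ℝ) else -1) * (M * ∏ m, q m (s m))
              = M * ∏ m, ((if m = n then (if s m then (1:ℝ) else -1) else 1) * q m (s m)) := by
          intro s
          rw [Finset.prod_mul_distrib]
          have : (∏ m, (if m = n then (if s m then (1:ℝ) else -1) else 1))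
              = (if s n then (1:ℝ) else -1) := by
            rw [Finset.prod_ite_eq' Finset.univ n
              (fun m => (if s m then (1:ℝ) else -1))]
            simp
          rw [this]; ring
        calc ∑ s : Fin N → Bool, (if s n then (1:ℝ) else -1) * (M * ∏ m, q m (s m))
            = M * ∑ s : Fin N → Bool,
                ∏ m, ((if m = n then (if s m then (1:ℝ) else -1) else 1) * q m (s m)) := by
              rw [Finset.mul_sum]; exact Finset.sum_congr rfl fun s _ => key s
          _ = M * ∏ m, ∑ b : Bool, ((if m = n then (if b then (1:ℝ) else -1) else 1) * q m b) := by
              rw [Finset.prod_univ_sum]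
              congr 1
          _ = M * ∏ m, (if m = n then x n / M else 1) := by
              congr 1
              refine Finset.prod_congr rfl fun m _ => ?_
              by_cases hmn : m = n
              · subst hmn
                simp only [if_pos rfl, Fintype.sum_bool]
                have := hqsign m
                simp only [if_pos, Bool.cond_true]
                simpa [one_mul, neg_one_mul] using by linarith [hqsign m]
              · simp [hmn, Fintype.sum_bool, hqsum m]
          _ = M * (x n / M) := by
              rw [Finset.prod_ite_eq' Finset.univ n (fun _ => x n / M)]
              simp
          _ = x n := by field_simp
      · have habs : ∀ s : Fin N → Bool,
            |M * ∏ m, q m (s m)| = M * ∏ m, q m (s m) := by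
          intro s
          exact abs_of_nonneg (mul_nonneg hMpos.le
            (Finset.prod_nonneg fun m _ => hqnonneg m (s m)))
        calc M = M * ∏ m : Fin N, (1:ℝ) := by simp
          _ = M * ∏ m, ∑ b : Bool, q m b := by
              congr 1
              exact Finset.prod_congr rfl fun m _ => by
                simp [Fintype.sum_bool, hqsum m]
          _ = M * ∑ s : Fin N → Bool, ∏ m, q m (s m) := by
              rw [Finset.prod_univ_sum]
              congr 1
          _ = ∑ s : Fin N → Bool, M * ∏ m, q m (s m) := by rw [Finset.mul_sum]
          _ = ∑ s : Fin N → Bool, |M * ∏ m, q m (s m)| := by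
              exact Finset.sum_congr rfl fun s _ => (habs s).symm
  · -- lower bound
    rintro c ⟨z, hz, rfl⟩
    have hnn : (0:ℝ) ≤ ∑ s : Fin N → Bool, |z s| :=
      Finset.sum_nonneg fun s _ => abs_nonneg _
    refine (pi_norm_le_iff_of_nonneg hnn).mpr fun n => ?_
    rw [Real.norm_eq_abs, ← hz n]
    calc |∑ s : Fin N → Bool, (if s n then (1:ℝ) else -1) * z s|
        ≤ ∑ s : Fin N → Bool, |(if s n then (1:ℝ) else -1) * z s| :=
          Finset.abs_sum_le_sum_abs _ _
      _ = ∑ s : Fin N → Bool, |z s| := by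
          refine Finset.sum_congr rfl fun s _ => ?_
          rcases Bool.eq_false_or_eq_true (s n) with h | h <;> simp [h]
end

section
/- For d ≥ 3, there is no matrix L ∈ ℝ^{N×d} (for any N) such that ‖x‖_∞ = ‖Lx‖₁ for all x ∈ ℝ^d. -/
lemma hlawka_real (a b c : ℝ) : |a+b|+|b+c|+|a+c| ≤ |a|+|b|+|c|+|a+b+c| := by
  rcases abs_cases a with ⟨h1,_⟩|⟨h1,_⟩ <;>
  rcases abs_cases b with ⟨h2,_⟩|⟨h2,_⟩ <;>
  rcases abs_cases c with ⟨h3,_⟩|⟨h3,_⟩ <;>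
  rcases abs_cases (a+b) with ⟨h4,_⟩|⟨h4,_⟩ <;>
  rcases abs_cases (b+c) with ⟨h5,_⟩|⟨h5,_⟩ <;>
  rcases abs_cases (a+c) with ⟨h6,_⟩|⟨h6,_⟩ <;>
  rcases abs_cases (a+b+c) with ⟨h7,_⟩|⟨h7,_⟩ <;>
  linarith

lemma pi_norm_eq {d : ℕ} (f : Fin d → ℝ) (M : ℝ) (hM : 0 ≤ M)
    (h1 : ∀ i, |f i| ≤ M) (i0 : Fin d) (h2 : |f i0| = M) : ‖f‖ = M := by
  refine le_antisymm ((pi_norm_le_iff_of_nonneg hM).2 fun i => ?_) ?_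
  · simpa [Real.norm_eq_abs] using h1 i
  · calc M = ‖f i0‖ := by simp [Real.norm_eq_abs, h2]
      _ ≤ ‖f‖ := norm_le_pi_norm f i0

theorem stmt_18 {d : ℕ} (hd : 3 ≤ d) :
    ¬∃ (N : ℕ) (L : Matrix (Fin N) (Fin d) ℝ),
        ∀ x : Fin d → ℝ, ‖x‖ = ∑ n, |L.mulVec x n| := by
  rintro ⟨N, L, h⟩
  set i0 : Fin d := ⟨0, by omega⟩ with hi0
  set i1 : Fin d := ⟨1, by omega⟩ with hi1
  set i2 : Fin d := ⟨2, by omega⟩ with hi2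
  have h01 : i0 ≠ i1 := by simp [hi0, hi1, Fin.ext_iff]
  have h02 : i0 ≠ i2 := by simp [hi0, hi2, Fin.ext_iff]
  have h12 : i1 ≠ i2 := by simp [hi1, hi2, Fin.ext_iff]
  set u : Fin d → ℝ := fun i => if i = i0 then 1 else if i = i1 then 1 else if i = i2 then -1 else 0 with hu
  set v : Fin d → ℝ := fun i => if i = i0 then 1 else if i = i1 then -1 else if i = i2 then 1 else 0 with hv
  set w : Fin d → ℝ := fun i => if i = i0 then -1 else if i = i1 then 1 else if i = i2 then 1 else 0 with hw
  have hnu : ‖u‖ = 1 := by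
    refine pi_norm_eq u 1 (by norm_num) (fun i => ?_) i0 (by simp [hu])
    simp only [hu]; split_ifs <;> norm_num
  have hnv : ‖v‖ = 1 := by
    refine pi_norm_eq v 1 (by norm_num) (fun i => ?_) i0 (by simp [hv])
    simp only [hv]; split_ifs <;> norm_num
  have hnw : ‖w‖ = 1 := by
    refine pi_norm_eq w 1 (by norm_num) (fun i => ?_) i1 (by simp [hw, h01.symm])
    simp only [hw]; split_ifs <;> norm_num
  have hnuv : ‖u + v‖ = 2 := by
    refine pi_norm_eq (u+v) 2 (by norm_num) (fun i => ?_) i0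
      (by simp [hu, hv, Pi.add_apply]; try norm_num)
    simp only [Pi.add_apply, hu, hv]; split_ifs <;> norm_num
  have hnvw : ‖v + w‖ = 2 := by
    refine pi_norm_eq (v+w) 2 (by norm_num) (fun i => ?_) i2
      (by simp [hv, hw, Pi.add_apply, h02.symm, h12.symm]; norm_num)
    simp only [Pi.add_apply, hv, hw]; split_ifs <;> norm_num
  have hnuw : ‖u + w‖ = 2 := by
    refine pi_norm_eq (u+w) 2 (by norm_num) (fun i => ?_) i1
      (by simp [hu, hw, Pi.add_apply, h01.symm]; norm_num)
    simp only [Pi.add_apply, hu, hw]; split_ifs <;> norm_num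
  have hnuvw : ‖u + v + w‖ = 1 := by
    refine pi_norm_eq (u+v+w) 1 (by norm_num) (fun i => ?_) i0
      (by simp [hu, hv, hw, Pi.add_apply]; try norm_num)
    simp only [Pi.add_apply, hu, hv, hw]; split_ifs <;> norm_num
  have key : ‖u + v‖ + ‖v + w‖ + ‖u + w‖ ≤ ‖u‖ + ‖v‖ + ‖w‖ + ‖u + v + w‖ := by
    rw [h, h, h, h, h, h, h]
    simp only [Matrix.mulVec_add, Pi.add_apply]
    rw [← Finset.sum_add_distrib, ← Finset.sum_add_distrib, ← Finset.sum_add_distrib,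
      ← Finset.sum_add_distrib, ← Finset.sum_add_distrib]
    exact Finset.sum_le_sum fun n _ => by
      have := hlawka_real (L.mulVec u n) (L.mulVec v n) (L.mulVec w n)
      linarith
  rw [hnu, hnv, hnw, hnuv, hnvw, hnuw, hnuvw] at key
  norm_num at key
end
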